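/- Fix an integer C ≥ 2 and define G(j) = (4C/j)·∑_{m=1}^{j} T(j,m) − 2 where T(j,m) = (C−1)!·(C−j)! / ((C−m)!·(C−j−1+m)!). Then G(j+1) ≥ G(j) for all 1 ≤ j ≤ C−2. -/

import Mathlib

section helpers
variable (C : ℕ) (T : ℕ → ℕ → ℝ)
variable (hT : ∀ j m, T j m = ((Nat.factorial (C - 1)) * (Nat.factorial (C - j))) /
      ((Nat.factorial (C - m)) * (Nat.factorial (C - j - 1 + m))))

include hT

lemma Tpos : ∀ j m, 0 < T j m := by
  intro j m
  rw [hT]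
  apply div_pos
  · exact_mod_cast Nat.mul_pos (Nat.factorial_pos _) (Nat.factorial_pos _)
  · exact_mod_cast Nat.mul_pos (Nat.factorial_pos _) (Nat.factorial_pos _)

lemma Tone (j : ℕ) (hj : j + 1 ≤ C) : T j 1 = 1 := by
  rw [hT]
  have e : C - j - 1 + 1 = C - j := by omega
  rw [e, mul_comm (Nat.factorial (C-1) : ℝ)]
  exact div_self (by exact_mod_cast Nat.mul_pos (Nat.factorial_pos _) (Nat.factorial_pos _) |>.ne')

lemma Ttop (j : ℕ) (hj : j + 2 ≤ C) : T (j+1) (j+1) = 1 := by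
  rw [hT]
  have e : C - (j+1) - 1 + (j+1) = C - 1 := by omega
  rw [e, mul_comm (Nat.factorial (C-1) : ℝ)]
  exact div_self (by exact_mod_cast Nat.mul_pos (Nat.factorial_pos _) (Nat.factorial_pos _) |>.ne')

lemma Tsym (j m : ℕ) (h1 : 1 ≤ m) (h2 : m ≤ j) (hj : j + 1 ≤ C) :
    T j m = T j (j + 1 - m) := by
  rw [hT, hT]
  have e1 : C - (j + 1 - m) = C - j - 1 + m := by omega
  have e2 : C - j - 1 + (j + 1 - m) = C - m := by omega
  rw [e1, e2, mul_comm ((Nat.factorial (C - m) : ℝ))]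

lemma TrecM (j m : ℕ) (h1 : 1 ≤ m) (hm : m + 1 ≤ j) (hj : j + 2 ≤ C) :
    T j (m+1) * ((C:ℝ) - j + m) = T j m * ((C:ℝ) - m) := by
  have hf1 : Nat.factorial (C - m) = (C - m) * Nat.factorial (C - (m+1)) := by
    have e : C - m = (C - (m+1)) + 1 := by omega
    rw [e, Nat.factorial_succ, ← e]
  have hf2 : Nat.factorial (C - j - 1 + (m+1)) =
      (C - j + m) * Nat.factorial (C - j - 1 + m) := by
    have e : C - j - 1 + (m+1) = (C - j - 1 + m) + 1 := by omega
    rw [e, Nat.factorial_succ]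
    congr 1
    omega
  have c1 : ((C - m : ℕ) : ℝ) = (C:ℝ) - m := by
    rw [Nat.cast_sub (by omega)]
  have c2 : ((C - j + m : ℕ) : ℝ) = (C:ℝ) - j + m := by
    rw [Nat.cast_add, Nat.cast_sub (by omega)]
  have n1 : ((Nat.factorial (C - (m+1)) : ℝ)) ≠ 0 := by exact_mod_cast (Nat.factorial_pos _).ne'
  have n2 : ((Nat.factorial (C - j - 1 + m) : ℝ)) ≠ 0 := by exact_mod_cast (Nat.factorial_pos _).ne'
  have n3 : ((C:ℝ) - m) ≠ 0 := by
    have : (m:ℝ) + 2 ≤ C := by exact_mod_cast (by omega : m + 2 ≤ C)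
    intro h; linarith
  have n4 : ((C:ℝ) - j + m) ≠ 0 := by
    have h1 : (j:ℝ) + 2 ≤ C := by exact_mod_cast hj
    have h2 : (0:ℝ) ≤ m := Nat.cast_nonneg m
    intro h; linarith
  rw [hT, hT, hf1, hf2, Nat.cast_mul, Nat.cast_mul, c1, c2]
  field_simp

lemma TrecJ (j m : ℕ) (h1 : 1 ≤ m) (hj : j + 2 ≤ C) :
    T (j+1) m * ((C:ℝ) - j) = T j m * ((C:ℝ) - j - 1 + m) := by
  have hf1 : Nat.factorial (C - j) = (C - j) * Nat.factorial (C - (j+1)) := by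
    have e : C - j = (C - (j+1)) + 1 := by omega
    rw [e, Nat.factorial_succ, ← e]
  have hf2 : Nat.factorial (C - j - 1 + m) =
      (C - j - 1 + m) * Nat.factorial (C - (j+1) - 1 + m) := by
    have e : C - j - 1 + m = (C - (j+1) - 1 + m) + 1 := by omega
    conv_lhs => rw [e]
    rw [Nat.factorial_succ, ← e]
  have c1 : ((C - j : ℕ) : ℝ) = (C:ℝ) - j := by
    rw [Nat.cast_sub (by omega)]
  have c2 : ((C - j - 1 + m : ℕ) : ℝ) = (C:ℝ) - j - 1 + m := by
    have e : C - j - 1 = C - (j+1) := by omega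
    rw [e, Nat.cast_add, Nat.cast_sub (by omega)]
    push_cast
    ring
  have n1 : ((Nat.factorial (C - (j+1)) : ℝ)) ≠ 0 := by exact_mod_cast (Nat.factorial_pos _).ne'
  have n2 : ((Nat.factorial (C - (j+1) - 1 + m) : ℝ)) ≠ 0 := by exact_mod_cast (Nat.factorial_pos _).ne'
  have n3 : ((Nat.factorial (C - m) : ℝ)) ≠ 0 := by exact_mod_cast (Nat.factorial_pos _).ne'
  have n4 : ((C:ℝ) - j) ≠ 0 := by
    have h1 : (j:ℝ) + 2 ≤ C := by exact_mod_cast hj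
    intro h; linarith
  have n5 : ((C:ℝ) - j - 1 + m) ≠ 0 := by
    have h1 : (j:ℝ) + 2 ≤ C := by exact_mod_cast hj
    have h2 : (0:ℝ) ≤ m := Nat.cast_nonneg m
    intro h; linarith
  rw [hT, hT, hf1, hf2, Nat.cast_mul, Nat.cast_mul, c1, c2]
  field_simp

end helpers

theorem stmt17 (C : ℕ) (hC : 2 ≤ C)
    (T : ℕ → ℕ → ℝ)
    (hT : ∀ j m, T j m = ((Nat.factorial (C - 1)) * (Nat.factorial (C - j))) /
      ((Nat.factorial (C - m)) * (Nat.factorial (C - j - 1 + m))))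
    (G : ℕ → ℝ)
    (hG : ∀ j, G j = (4 * (C : ℝ) / (j : ℝ)) * (∑ m ∈ Finset.Icc 1 j, T j m) - 2) :
    ∀ j : ℕ, 1 ≤ j → j ≤ C - 2 → G (j + 1) ≥ G j := by
  intro j hj1 hj2
  have hjC : j + 2 ≤ C := by omega
  have hjCr : (j:ℝ) + 2 ≤ (C:ℝ) := by exact_mod_cast hjC
  have hD : (0:ℝ) < (C:ℝ) - j := by linarith
  have hTpos := Tpos C T hT
  -- Key claim, proved by induction on m
  have claim : ∀ m, 1 ≤ m → m ≤ j → 2*m ≤ j + 2 →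
      T j m * (((C:ℝ) - j) - ((m:ℝ)-1)*((j:ℝ)-m)) ≤ (C:ℝ) - j := by
    intro m
    induction m with
    | zero => omega
    | succ m ih =>
      intro h1 h2 h3
      rcases Nat.eq_zero_or_pos m with hm0 | hm1
      · subst hm0
        rw [Tone C T hT j (by omega)]
        push_cast
        norm_num
      · have hmj : m + 1 ≤ j := h2
        have h2m : 2*m ≤ j := by omega
        have hIH := ih hm1 (by omega) (by omega)
        have hrec := TrecM C T hT j m hm1 (by omega) hjC
        have hp : (0:ℝ) < (C:ℝ) - j + m := by
          have : (0:ℝ) ≤ m := Nat.cast_nonneg m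
          linarith
        have hmr : 2*(m:ℝ) ≤ (j:ℝ) := by exact_mod_cast h2m
        have hmjr : (m:ℝ) + 1 ≤ (j:ℝ) := by exact_mod_cast hmj
        have hnn : 0 ≤ ((j:ℝ) - 2*m) * ((m:ℝ) * ((j:ℝ) - m)) := by
          apply mul_nonneg (by linarith)
          apply mul_nonneg (Nat.cast_nonneg m)
          linarith
        have key : ((C:ℝ) - m) * (((C:ℝ) - j) - (m:ℝ)*((j:ℝ)-(m+1))) ≤
            ((C:ℝ) - j + m) * (((C:ℝ) - j) - ((m:ℝ)-1)*((j:ℝ)-m)) := by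
          nlinarith [hnn]
        have hT1 : T j (m+1) = T j m * ((C:ℝ) - m) / ((C:ℝ) - j + m) := by
          rw [eq_div_iff hp.ne']
          linear_combination hrec
        rw [hT1]
        push_cast
        rw [div_mul_eq_mul_div, div_le_iff₀ hp]
        have t1 := mul_le_mul_of_nonneg_left key (hTpos j m).le
        have t2 := mul_le_mul_of_nonneg_left hIH hp.le
        nlinarith [t1, t2]
  -- bound for all m in [1, j]
  have claim2 : ∀ m, 1 ≤ m → m ≤ j →
      T j m * (((C:ℝ) - j) - ((m:ℝ)-1)*((j:ℝ)-m)) ≤ (C:ℝ) - j := by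
    intro m h1 h2
    by_cases hc : 2*m ≤ j + 2
    · exact claim m h1 h2 hc
    · have hc' := claim (j+1-m) (by omega) (by omega) (by omega)
      rw [Tsym C T hT j m h1 h2 (by omega)]
      have cc : ((j+1-m : ℕ):ℝ) = (j:ℝ)+1-(m:ℝ) := by
        rw [Nat.cast_sub (by omega)]
        push_cast
        ring
      rw [cc] at hc'
      linear_combination hc'
  have bound : ∀ m ∈ Finset.Icc 1 j, T j m * (2*((C:ℝ)-j) - (j:ℝ)*((j:ℝ)-1)) ≤ 2*((C:ℝ)-j) := by
    intro m hm
    rw [Finset.mem_Icc] at hm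
    obtain ⟨h1, h2⟩ := hm
    have cl := claim2 m h1 h2
    have h1r : (1:ℝ) ≤ (m:ℝ) := by exact_mod_cast h1
    have h2r : (m:ℝ) ≤ (j:ℝ) := by exact_mod_cast h2
    have h2f : 2*(((m:ℝ)-1)*((j:ℝ)-m)) ≤ (j:ℝ)*((j:ℝ)-1) := by
      nlinarith [sq_nonneg (((m:ℝ)-1) - ((j:ℝ)-m)), mul_nonneg (by linarith : (0:ℝ) ≤ (m:ℝ)-1) (by linarith : (0:ℝ) ≤ (j:ℝ)-m)]
    nlinarith [cl, mul_nonneg (hTpos j m).le (by linarith : (0:ℝ) ≤ (j:ℝ)*((j:ℝ)-1) - 2*(((m:ℝ)-1)*((j:ℝ)-m)))]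
  -- sum bound
  have key2 : (∑ m ∈ Finset.Icc 1 j, T j m) * (2*((C:ℝ)-j) - (j:ℝ)*((j:ℝ)-1)) ≤
      (j:ℝ) * (2*((C:ℝ)-j)) := by
    rw [Finset.sum_mul]
    calc ∑ m ∈ Finset.Icc 1 j, T j m * (2*((C:ℝ)-j) - (j:ℝ)*((j:ℝ)-1))
        ≤ ∑ m ∈ Finset.Icc 1 j, 2*((C:ℝ)-j) := Finset.sum_le_sum bound
      _ = (j:ℝ) * (2*((C:ℝ)-j)) := by
          rw [Finset.sum_const, Nat.card_Icc]
          simp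
  -- symmetry of the weighted sum
  have hsymsum : ∑ m ∈ Finset.Icc 1 j, ((m:ℝ)-1) * T j m
      = ∑ m ∈ Finset.Icc 1 j, ((j:ℝ)-m) * T j m := by
    apply Finset.sum_nbij' (i := fun m => j + 1 - m) (j := fun m => j + 1 - m)
    · intro a ha; rw [Finset.mem_Icc] at *; omega
    · intro a ha; rw [Finset.mem_Icc] at *; omega
    · intro a ha; rw [Finset.mem_Icc] at ha; omega
    · intro a ha; rw [Finset.mem_Icc] at ha; omega
    · intro a ha
      rw [Finset.mem_Icc] at ha
      rw [← Tsym C T hT j a ha.1 ha.2 (by omega)]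
      have cc : ((j+1-a : ℕ):ℝ) = (j:ℝ)+1-(a:ℝ) := by
        rw [Nat.cast_sub (by omega)]
        push_cast
        ring
      rw [cc]
      ring
  have twosum : 2 * ∑ m ∈ Finset.Icc 1 j, ((m:ℝ)-1) * T j m
      = ((j:ℝ)-1) * ∑ m ∈ Finset.Icc 1 j, T j m := by
    calc 2 * ∑ m ∈ Finset.Icc 1 j, ((m:ℝ)-1) * T j m
        = (∑ m ∈ Finset.Icc 1 j, ((m:ℝ)-1) * T j m)
          + ∑ m ∈ Finset.Icc 1 j, ((j:ℝ)-m) * T j m := by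
          rw [← hsymsum]; ring
      _ = ∑ m ∈ Finset.Icc 1 j, (((m:ℝ)-1) * T j m + ((j:ℝ)-m) * T j m) :=
          (Finset.sum_add_distrib).symm
      _ = ∑ m ∈ Finset.Icc 1 j, ((j:ℝ)-1) * T j m := by
          apply Finset.sum_congr rfl
          intro m hm; ring
      _ = ((j:ℝ)-1) * ∑ m ∈ Finset.Icc 1 j, T j m := by
          rw [Finset.mul_sum]
  -- recurrence for the sum
  have hSsucc : ∑ m ∈ Finset.Icc 1 (j+1), T (j+1) m
      = (∑ m ∈ Finset.Icc 1 j, T j m)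
        + (∑ m ∈ Finset.Icc 1 j, ((m:ℝ)-1) * T j m)/((C:ℝ)-j) + 1 := by
    rw [Finset.sum_Icc_succ_top (by omega : 1 ≤ j+1), Ttop C T hT j hjC]
    have e : ∀ m ∈ Finset.Icc 1 j, T (j+1) m = T j m + ((m:ℝ)-1)*T j m/((C:ℝ)-j) := by
      intro m hm
      rw [Finset.mem_Icc] at hm
      have hrec := TrecJ C T hT j m hm.1 hjC
      field_simp
      linear_combination hrec
    rw [Finset.sum_congr rfl e, Finset.sum_add_distrib, ← Finset.sum_div]
  -- the main inequality  j * S(j+1) ≥ (j+1) * S(j)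
  set Sj : ℝ := ∑ m ∈ Finset.Icc 1 j, T j m with hSj
  set Sj' : ℝ := ∑ m ∈ Finset.Icc 1 (j+1), T (j+1) m with hSj'
  have hW : ∑ m ∈ Finset.Icc 1 j, ((m:ℝ)-1) * T j m = ((j:ℝ)-1) * Sj / 2 := by
    linarith [twosum]
  rw [hW] at hSsucc
  have hq : ((j:ℝ)+1) * Sj ≤ (j:ℝ) * Sj' := by
    rw [hSsucc]
    have expand : (j:ℝ)*(Sj + (((j:ℝ)-1) * Sj / 2)/((C:ℝ)-j) + 1) - ((j:ℝ)+1)*Sj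
        = ((j:ℝ)*((j:ℝ)-1)*Sj + 2*(j:ℝ)*((C:ℝ)-j) - 2*((C:ℝ)-j)*Sj)/(2*((C:ℝ)-j)) := by
      field_simp
      ring
    have hN : (0:ℝ) ≤ (j:ℝ)*((j:ℝ)-1)*Sj + 2*(j:ℝ)*((C:ℝ)-j) - 2*((C:ℝ)-j)*Sj := by
      nlinarith [key2]
    have hdiv : (0:ℝ) ≤ ((j:ℝ)*((j:ℝ)-1)*Sj + 2*(j:ℝ)*((C:ℝ)-j) - 2*((C:ℝ)-j)*Sj)/(2*((C:ℝ)-j)) :=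
      div_nonneg hN (by linarith)
    linarith [expand, hdiv]
  -- conclude
  have hj0 : (0:ℝ) < (j:ℝ) := by exact_mod_cast hj1
  have hj10 : (0:ℝ) < (j:ℝ) + 1 := by linarith
  have hfrac : Sj / (j:ℝ) ≤ Sj' / ((j:ℝ)+1) := by
    rw [div_le_div_iff₀ hj0 hj10]
    nlinarith [hq]
  rw [ge_iff_le, hG j, hG (j+1)]
  have hC0 : (0:ℝ) ≤ 4*(C:ℝ) := by positivity
  have hmul := mul_le_mul_of_nonneg_left hfrac hC0
  have e1 : 4*(C:ℝ)/(j:ℝ) * Sj = 4*(C:ℝ) * (Sj/(j:ℝ)) := by ring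
  have e2 : 4*(C:ℝ)/((j:ℝ)+1) * Sj' = 4*(C:ℝ) * (Sj'/((j:ℝ)+1)) := by ring
  push_cast
  rw [e1, e2]
  linarith [hmul]
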